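/- Let β > 0 and let ν be an interior point of the unit simplex. Then ν is a stationary point of f_{β,α} with α = χ_β(ν) := (νᵢ e^{-βνᵢ} / Σₖ νₖ e^{-βνₖ})_{i=1,2,3}; conversely, if ν is a stationary point of f_{β,α} for some α in the open simplex, then α = χ_β(ν). -/

import Mathlib

open Finset

lemma aux_hasDerivAt_log_term (a c v : ℝ) (ha : 0 < a) (hc : 0 < c) :
    HasDerivAt (fun t : ℝ => (a + t * v) * Real.log ((a + t * v) / c))
      ((Real.log (a / c) + 1) * v) 0 := by
  have hl : HasDerivAt (fun t : ℝ => a + t * v) v 0 := by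
    simpa using ((hasDerivAt_id 0).mul_const v).const_add a
  have h1 : HasDerivAt (fun x : ℝ => x * Real.log x - x * Real.log c)
      (Real.log (a / c) + 1) a := by
    have := (Real.hasDerivAt_mul_log ha.ne').fun_sub ((hasDerivAt_id a).mul_const (Real.log c))
    refine this.congr_deriv ?_
    rw [Real.log_div ha.ne' hc.ne']
    ring
  have hg : HasDerivAt (fun x : ℝ => x * Real.log (x / c)) (Real.log (a / c) + 1) a := by
    apply h1.congr_of_eventuallyEq
    filter_upwards [eventually_gt_nhds ha] with x hx
    rw [Real.log_div hx.ne' hc.ne']; ring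
  have hg' : HasDerivAt (fun x : ℝ => x * Real.log (x / c)) (Real.log (a / c) + 1)
      (a + 0 * v) := by simpa using hg
  simpa [Function.comp_def] using hg'.comp 0 hl

lemma aux_deriv_eq (β : ℝ) (ν α v : Fin 3 → ℝ) (hν : ∀ k, 0 < ν k) (hα : ∀ k, 0 < α k) :
    deriv (fun t : ℝ =>
        -(β/2) * ∑ k, (ν k + t * v k)^2
          + ∑ k, (ν k + t * v k) * Real.log ((ν k + t * v k) / α k)) 0
      = ∑ k, v k * (-β * ν k + Real.log (ν k / α k) + 1) := by
  have h1 : HasDerivAt (fun t : ℝ => ∑ k, (ν k + t * v k)^2)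
      (∑ k, 2 * ν k * v k) 0 := by
    have := HasDerivAt.fun_sum (fun (k : Fin 3) (_ : k ∈ Finset.univ) =>
      (((hasDerivAt_id (0:ℝ)).mul_const (v k)).const_add (ν k)).fun_pow 2)
    simpa using this
  have h2 : HasDerivAt (fun t : ℝ => ∑ k, (ν k + t * v k) * Real.log ((ν k + t * v k) / α k))
      (∑ k, (Real.log (ν k / α k) + 1) * v k) 0 :=
    HasDerivAt.fun_sum fun k _ => aux_hasDerivAt_log_term (ν k) (α k) (v k) (hν k) (hα k)
  have htot := (h1.const_mul (-(β/2))).fun_add h2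
  rw [htot.deriv]
  rw [Finset.mul_sum, ← Finset.sum_add_distrib]
  apply Finset.sum_congr rfl
  intro k _
  ring

open Finset in
/-- An interior point ν of the simplex is a stationary point of f_{β,α}
(derivative zero along every tangent direction) if and only if
α = χ_β(ν) = (νᵢ e^{-βνᵢ} / Σₖ νₖ e^{-βνₖ})ᵢ. -/
theorem stationary_iff_catastrophe_map
    (β : ℝ) (hβ : 0 < β) (ν α : Fin 3 → ℝ)
    (hν : ∀ k, 0 < ν k) (hνsum : ∑ k, ν k = 1)
    (hα : ∀ k, 0 < α k) (hαsum : ∑ k, α k = 1) :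
    (∀ v : Fin 3 → ℝ, (∑ k, v k = 0) →
        deriv (fun t : ℝ =>
          -(β/2) * ∑ k, (ν k + t * v k)^2
            + ∑ k, (ν k + t * v k) * Real.log ((ν k + t * v k) / α k)) 0 = 0)
      ↔ (∀ i, α i = ν i * Real.exp (-β * ν i)
            / ∑ k, ν k * Real.exp (-β * ν k)) := by
  set S : ℝ := ∑ k, ν k * Real.exp (-β * ν k) with hS_def
  have hS : 0 < S :=
    Finset.sum_pos (fun k _ => mul_pos (hν k) (Real.exp_pos _)) ⟨0, Finset.mem_univ 0⟩
  constructor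
  · intro hstat
    set c : Fin 3 → ℝ := fun k => -β * ν k + Real.log (ν k / α k) with hc_def
    -- c is constant
    have hconst : ∀ i j, c i = c j := by
      intro i j
      have hsum0 : ∑ k, ((if k = i then (1:ℝ) else 0) - (if k = j then 1 else 0)) = 0 := by
        rw [Finset.sum_sub_distrib]; simp
      have := hstat _ hsum0
      rw [aux_deriv_eq β ν α _ hν hα] at this
      have hexp : ∑ k, ((if k = i then (1:ℝ) else 0) - (if k = j then 1 else 0))
          * (-β * ν k + Real.log (ν k / α k) + 1) = (c i + 1) - (c j + 1) := by
        simp only [sub_mul, Finset.sum_sub_distrib, ite_mul, one_mul, zero_mul]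
        simp [hc_def]
      rw [hexp] at this
      linarith
    have hform : ∀ k, α k = ν k * Real.exp (-β * ν k) * Real.exp (-(c 0)) := by
      intro k
      have hpos : 0 < ν k / α k := div_pos (hν k) (hα k)
      have hl : Real.log (ν k / α k) = c 0 + β * ν k := by
        have := hconst k 0
        simp only [hc_def] at this ⊢
        linarith
      have he : ν k / α k = Real.exp (c 0 + β * ν k) := by
        rw [← hl, Real.exp_log hpos]
      have hne : Real.exp (c 0 + β * ν k) ≠ 0 := Real.exp_ne_zero _
      have heq : ν k = Real.exp (c 0 + β * ν k) * α k := (div_eq_iff (hα k).ne').mp he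
      have hαk : α k = ν k / Real.exp (c 0 + β * ν k) := by
        rw [eq_div_iff hne]; linarith [heq]
      have h2 : α k = ν k * Real.exp (-(c 0 + β * ν k)) := by
        rw [Real.exp_neg, hαk, div_eq_mul_inv]
      have h3 : Real.exp (-(c 0 + β * ν k)) = Real.exp (-β * ν k) * Real.exp (-(c 0)) := by
        rw [← Real.exp_add]; congr 1; ring
      rw [h2, h3, ← mul_assoc]
    have hsum1 : (1:ℝ) = S * Real.exp (-(c 0)) := by
      calc (1:ℝ) = ∑ k, α k := hαsum.symm
      _ = ∑ k, ν k * Real.exp (-β * ν k) * Real.exp (-(c 0)) :=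
          Finset.sum_congr rfl fun k _ => hform k
      _ = S * Real.exp (-(c 0)) := by rw [hS_def, Finset.sum_mul]
    intro i
    rw [hform i]
    have : Real.exp (-(c 0)) = 1 / S := by
      field_simp
      linarith [hsum1]
    rw [this]
    field_simp
  · intro hform v hv
    rw [aux_deriv_eq β ν α v hν hα]
    have hlog : ∀ k, -β * ν k + Real.log (ν k / α k) + 1 = Real.log S + 1 := by
      intro k
      have hq : ν k / α k = S * Real.exp (β * ν k) := by
        rw [hform k]
        rw [neg_mul, Real.exp_neg]
        field_simp [(hν k).ne', hS.ne']
      rw [hq, Real.log_mul hS.ne' (Real.exp_ne_zero _), Real.log_exp]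
      ring
    calc ∑ k, v k * (-β * ν k + Real.log (ν k / α k) + 1)
        = ∑ k, v k * (Real.log S + 1) := Finset.sum_congr rfl fun k _ => by rw [hlog k]
      _ = (∑ k, v k) * (Real.log S + 1) := by rw [Finset.sum_mul]
      _ = 0 := by rw [hv, zero_mul]
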